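/- Let R be a ring, A ⊆ B a pure-essential extension with Z(B) ⊆ A (the singular submodule of B is contained in A). Then every injective submodule X of B is contained in A. -/

import Mathlib

open IsLocalRing Pointwise

universe u v

variable (R : Type u) [CommRing R]

/-- A submodule `A ⊆ B` is pure if for every module `X`, `X ⊗ A → X ⊗ B` is injective. -/
def IsPureSubmodule {B : Type v} [AddCommGroup B] [Module R B] (A : Submodule R B) : Prop :=
  ∀ (X : Type v) [AddCommGroup X] [Module R X],
    Function.Injective (LinearMap.lTensor X A.subtype)

/-- A linear map is a pure monomorphism if it is injective with pure range. -/
def IsPureMono {M N : Type v} [AddCommGroup M] [Module R M]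
    [AddCommGroup N] [Module R N] (f : M →ₗ[R] N) : Prop :=
  Function.Injective f ∧ IsPureSubmodule R (LinearMap.range f)

/-- A submodule `A ⊆ B` is pure-essential if it is pure and for every `X ⊆ B` with
`X ⊓ A = ⊥` and `(X ⊕ A)/X` pure in `B/X`, one has `X = ⊥`. -/
def IsPureEssential {B : Type v} [AddCommGroup B] [Module R B] (A : Submodule R B) : Prop :=
  IsPureSubmodule R A ∧
    ∀ X : Submodule R B, X ⊓ A = ⊥ → IsPureSubmodule R (A.map X.mkQ) → X = ⊥

/-- An injective linear map is a pure-essential embedding if its range is pure-essential. -/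
def IsPureEssentialEmb {M N : Type v} [AddCommGroup M] [Module R M]
    [AddCommGroup N] [Module R N] (f : M →ₗ[R] N) : Prop :=
  Function.Injective f ∧ IsPureEssential R (LinearMap.range f)

/-- `A ⊆ B` is strictly pure-essential if `A` is pure in `B` and every homomorphism out of `B`
restricting to a pure monomorphism on `A` is itself a pure monomorphism. -/
def IsStrictlyPureEssential {B : Type v} [AddCommGroup B] [Module R B]
    (A : Submodule R B) : Prop :=
  IsPureSubmodule R A ∧
    ∀ (Y : Type v) [AddCommGroup Y] [Module R Y] (f : B →ₗ[R] Y),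
      IsPureMono R (f ∘ₗ A.subtype) → IsPureMono R f

/-- `B` is an injective hull of `A` (via some embedding with essential range). -/
def IsInjectiveHull (A : Type v) (B : Type v) [AddCommGroup A] [Module R A]
    [AddCommGroup B] [Module R B] : Prop :=
  Module.Injective R B ∧ ∃ f : A →ₗ[R] B, Function.Injective f ∧
    ∀ X : Submodule R B, X ≠ ⊥ → X ⊓ LinearMap.range f ≠ ⊥

/-- The Matlis evaluation map `M → Hom(Hom(M,E),E)`. -/
noncomputable def matlisEval (E M : Type v) [AddCommGroup E] [Module R E]
    [AddCommGroup M] [Module R M] : M →ₗ[R] ((M →ₗ[R] E) →ₗ[R] E) :=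
  LinearMap.applyₗ

/-- `M` is Matlis-reflexive (w.r.t. `E`). -/
def IsMatlisReflexive (E M : Type v) [AddCommGroup E] [Module R E]
    [AddCommGroup M] [Module R M] : Prop :=
  Function.Bijective (matlisEval R E M)

/-- `M` is quasi-reflexive: the canonical map `M → M°°` is a pure-essential embedding. -/
def IsQuasiReflexive (E M : Type v) [AddCommGroup E] [Module R E]
    [AddCommGroup M] [Module R M] : Prop :=
  IsPureEssentialEmb R (matlisEval R E M)

/-- The largest radical-full submodule `P(M)` (sum of all `V` with `V = m V`). -/
def radicalFullPart [IsLocalRing R] (M : Type v) [AddCommGroup M] [Module R M] :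
    Submodule R M :=
  sSup {V : Submodule R M | V = maximalIdeal R • V}

/-- The largest divisible submodule `D(M)` (w.r.t. non-zerodivisors). -/
def divisiblePart (M : Type v) [AddCommGroup M] [Module R M] : Submodule R M :=
  sSup {V : Submodule R M | ∀ r ∈ nonZeroDivisors R, V ≤ r • V}

lemma aux_pure_of_map {B₁ B₂ : Type v} [AddCommGroup B₁] [Module R B₁]
    [AddCommGroup B₂] [Module R B₂] (A₂ : Submodule R B₂) (ψ : B₂ →ₗ[R] B₁)
    (hinj : ∀ y ∈ A₂, ψ y = 0 → y = 0)
    (h : IsPureSubmodule R (A₂.map ψ)) : IsPureSubmodule R A₂ := by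
  intro M _ _
  let g : A₂ →ₗ[R] (A₂.map ψ) :=
    (ψ.comp A₂.subtype).codRestrict (A₂.map ψ) fun c => Submodule.mem_map_of_mem c.2
  have hg : Function.Bijective g := by
    constructor
    · intro y z hyz
      have h1 : ψ y.1 = ψ z.1 := congrArg Subtype.val hyz
      have h0 : ψ (y.1 - z.1) = 0 := by rw [map_sub, h1, sub_self]
      exact Subtype.ext (sub_eq_zero.mp (hinj _ (sub_mem y.2 z.2) h0))
    · rintro ⟨w, y, hy, rfl⟩
      exact ⟨⟨y, hy⟩, rfl⟩
  set e := LinearEquiv.ofBijective g hg with he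
  have hgl : (e.symm.toLinearMap ∘ₗ g) = LinearMap.id := by
    ext c
    exact congrArg Subtype.val (e.symm_apply_apply c)
  have hginj : Function.Injective (LinearMap.lTensor M g) := by
    have hcmp : LinearMap.lTensor M e.symm.toLinearMap ∘ₗ LinearMap.lTensor M g
        = LinearMap.id := by
      rw [← LinearMap.lTensor_comp, hgl, LinearMap.lTensor_id]
    exact Function.LeftInverse.injective (g := LinearMap.lTensor M e.symm.toLinearMap)
      fun t => by
        have := LinearMap.ext_iff.mp hcmp t
        simpa using this
  have hcomp : (A₂.map ψ).subtype ∘ₗ g = ψ ∘ₗ A₂.subtype := rfl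
  have h1 : Function.Injective (LinearMap.lTensor M ((A₂.map ψ).subtype ∘ₗ g)) := by
    rw [LinearMap.lTensor_comp, LinearMap.coe_comp]
    exact Function.Injective.comp (h M) hginj
  rw [hcomp, LinearMap.lTensor_comp] at h1
  rw [LinearMap.coe_comp] at h1
  exact h1.of_comp

lemma aux_injective_of_retract {X E : Type u} [AddCommGroup X] [Module R X]
    [AddCommGroup E] [Module R E]
    (i : E →ₗ[R] X) (ρ : X →ₗ[R] E) (hri : ∀ e, ρ (i e) = e)
    (hX : Module.Injective R X) : Module.Injective R E := by
  constructor
  intro M N _ _ _ _ f hf g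
  obtain ⟨h, hh⟩ := hX.out f hf (i ∘ₗ g)
  refine ⟨ρ ∘ₗ h, fun m => ?_⟩
  have := hh m
  simp only [LinearMap.coe_comp, Function.comp_apply] at this ⊢
  rw [this, hri]

lemma aux_pure_solve {B : Type u} [AddCommGroup B] [Module R B] (A : Submodule R B)
    (hA : IsPureSubmodule R A) (x : B) (n : ℕ) (a : Fin n → R) (hx : ∀ i, a i • x ∈ A) :
    ∃ a' ∈ A, ∀ i, a i • x = a i • a' := by
  classical
  set K : Submodule R (Fin n → R) := Submodule.span R {a} with hK
  set c : Fin n → A := fun i => ⟨a i • x, hx i⟩ with hc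
  set t : TensorProduct R ((Fin n → R) ⧸ K) A :=
    ∑ i, K.mkQ (Pi.single i 1) ⊗ₜ[R] c i with ht
  have himg : LinearMap.lTensor _ A.subtype t = 0 := by
    rw [ht, map_sum]
    have step : ∀ i, LinearMap.lTensor ((Fin n → R) ⧸ K) A.subtype
        (K.mkQ (Pi.single i 1) ⊗ₜ[R] c i)
        = K.mkQ (Pi.single i (a i)) ⊗ₜ[R] x := by
      intro i
      rw [LinearMap.lTensor_tmul]
      show K.mkQ (Pi.single i 1) ⊗ₜ[R] (a i • x) = _
      rw [TensorProduct.tmul_smul, TensorProduct.smul_tmul', ← map_smul]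
      congr 2
      funext j
      rcases eq_or_ne j i with rfl | hji
      · simp
      · simp [Pi.single_eq_of_ne hji]
    simp_rw [step]
    rw [← TensorProduct.sum_tmul, ← map_sum]
    have : (∑ i, Pi.single i (a i) : Fin n → R) = a := Finset.univ_sum_single a
    rw [this]
    have ha : K.mkQ a = 0 := by
      rw [Submodule.mkQ_apply, Submodule.Quotient.mk_eq_zero]
      exact Submodule.mem_span_singleton_self a
    rw [ha, TensorProduct.zero_tmul]
  have ht0 : t = 0 := hA _ (by rw [himg, map_zero])
  -- extraction
  set w : A →ₗ[R] (Fin n → A) := LinearMap.pi (fun i => (a i) • LinearMap.id) with hw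
  set b : (Fin n → R) →ₗ[R] A →ₗ[R] ((Fin n → A) ⧸ LinearMap.range w) :=
    LinearMap.mk₂ R (fun r d => (LinearMap.range w).mkQ (fun i => r i • d))
      (fun r₁ r₂ d => by
        show (LinearMap.range w).mkQ (fun i => (r₁ + r₂) i • d) = _
        rw [← map_add]; congr 1; funext i; simp [add_smul])
      (fun s r d => by
        show (LinearMap.range w).mkQ (fun i => (s • r) i • d) = _
        rw [← map_smul]; congr 1; funext i; simp [mul_smul])
      (fun r d₁ d₂ => by
        show (LinearMap.range w).mkQ (fun i => r i • (d₁ + d₂)) = _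
        rw [← map_add]; congr 1; funext i; simp [smul_add])
      (fun s r d => by
        show (LinearMap.range w).mkQ (fun i => r i • (s • d)) = _
        rw [← map_smul]; congr 1; funext i; simp only [Pi.smul_apply]; rw [smul_comm]) with hb
  have hker : K ≤ LinearMap.ker b := by
    rw [hK, Submodule.span_le, Set.singleton_subset_iff]
    have : b a = 0 := by
      ext d
      show (LinearMap.range w).mkQ (fun i => a i • d) = 0
      rw [Submodule.mkQ_apply, Submodule.Quotient.mk_eq_zero]
      exact ⟨d, rfl⟩
    exact this
  set Φ : TensorProduct R ((Fin n → R) ⧸ K) A →ₗ[R] ((Fin n → A) ⧸ LinearMap.range w) :=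
    TensorProduct.lift (K.liftQ b hker) with hΦ
  have hΦt : Φ t = (LinearMap.range w).mkQ c := by
    rw [ht, map_sum]
    have step : ∀ i, Φ (K.mkQ (Pi.single i 1) ⊗ₜ[R] c i)
        = (LinearMap.range w).mkQ (Pi.single i (c i)) := by
      intro i
      rw [hΦ, TensorProduct.lift.tmul, Submodule.mkQ_apply, Submodule.liftQ_apply]
      have hb1 : (K.liftQ b hker) ((Submodule.Quotient.mk (Pi.single i (1:R)))) = b (Pi.single i (1:R)) := by
        rw [Submodule.liftQ_apply]
      have hb2 : (b (Pi.single i (1:R))) (c i)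
          = (LinearMap.range w).mkQ (fun j => (Pi.single i (1:R) : Fin n → R) j • c i) := rfl
      rw [hb2]
      congr 1
      funext j
      rcases eq_or_ne j i with rfl | hji
      · simp
      · simp [Pi.single_eq_of_ne hji]
    simp_rw [step]
    rw [← map_sum]
    congr 1
    exact Finset.univ_sum_single c
  rw [ht0, map_zero] at hΦt
  have hmem : c ∈ LinearMap.range w := by
    rw [← Submodule.Quotient.mk_eq_zero, ← Submodule.mkQ_apply]
    exact hΦt.symm
  obtain ⟨a', ha'⟩ := hmem
  refine ⟨a'.1, a'.2, fun i => ?_⟩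
  have := congrFun ha' i
  have h2 : a i • a' = c i := this
  have := congrArg Subtype.val h2
  simpa [hc] using this.symm

lemma aux_pureEssential_bot {B : Type u} [AddCommGroup B] [Module R B] (A : Submodule R B)
    (hA : IsPureEssential R A) (E : Submodule R B) (hE : Module.Injective R E)
    (hEA : E ⊓ A = ⊥) : E = ⊥ := by
  have hf₀ : Function.Injective (A.mkQ ∘ₗ E.subtype) := by
    intro y z hyz
    have hsub : y.1 - z.1 ∈ A := by
      rw [← Submodule.Quotient.eq]
      exact hyz
    have : y.1 - z.1 ∈ E ⊓ A := Submodule.mem_inf.mpr ⟨sub_mem y.2 z.2, hsub⟩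
    rw [hEA] at this
    exact Subtype.ext (sub_eq_zero.mp this)
  obtain ⟨r, hr⟩ := hE.out (A.mkQ ∘ₗ E.subtype) hf₀ LinearMap.id
  set q : B →ₗ[R] B := E.subtype ∘ₗ r ∘ₗ A.mkQ with hq
  have hqE : ∀ y ∈ E, q y = y := by
    intro y hy
    have : (A.mkQ ∘ₗ E.subtype) ⟨y, hy⟩ = A.mkQ y := rfl
    show E.subtype (r (A.mkQ y)) = y
    rw [← this, hr]
    rfl
  have hqA : ∀ a ∈ A, q a = 0 := by
    intro a ha
    show E.subtype (r (A.mkQ a)) = 0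
    have : A.mkQ a = 0 := by rw [Submodule.mkQ_apply, Submodule.Quotient.mk_eq_zero]; exact ha
    rw [this, map_zero, map_zero]
  have hqmem : ∀ b : B, q b ∈ E := fun b => (r (A.mkQ b)).2
  have hqq : ∀ b : B, q (q b) = q b := fun b => hqE _ (hqmem b)
  set C : Submodule R B := LinearMap.ker q with hC
  have hAC : A ≤ C := fun a ha => LinearMap.mem_ker.mpr (hqA a ha)
  have hinf : E ⊓ C = ⊥ := by
    rw [eq_bot_iff]
    rintro y hy
    obtain ⟨hyE, hyC⟩ := Submodule.mem_inf.mp hy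
    have : q y = 0 := LinearMap.mem_ker.mp hyC
    rw [hqE y hyE] at this
    simpa using this
  have hsup : E ⊔ C = ⊤ := by
    rw [Submodule.eq_top_iff']
    intro b
    refine Submodule.mem_sup.mpr ⟨q b, hqmem b, b - q b, ?_, by abel⟩
    refine LinearMap.mem_ker.mpr ?_
    rw [map_sub, hqq, sub_self]
  have hcompl : IsCompl E C := ⟨disjoint_iff.mpr hinf, codisjoint_iff.mpr hsup⟩
  set eqv := Submodule.quotientEquivOfIsCompl E C hcompl with heqv
  set ψ : (B ⧸ E) →ₗ[R] B := C.subtype ∘ₗ eqv.toLinearMap with hψ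
  have hψa : ∀ a ∈ A, ψ (E.mkQ a) = a := by
    intro a ha
    have h1 : eqv (Submodule.Quotient.mk ((⟨a, hAC ha⟩ : C) : B)) = ⟨a, hAC ha⟩ :=
      Submodule.quotientEquivOfIsCompl_apply_mk_coe hcompl _
    exact congrArg C.subtype h1
  have hmap : (A.map E.mkQ).map ψ = A := by
    ext y
    simp only [Submodule.mem_map]
    constructor
    · rintro ⟨z, ⟨a, ha, rfl⟩, rfl⟩
      rw [hψa a ha]; exact ha
    · intro hy
      exact ⟨E.mkQ y, ⟨y, hy, rfl⟩, hψa y hy⟩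
  have hψinj : ∀ y ∈ A.map E.mkQ, ψ y = 0 → y = 0 := by
    intro y _ h0
    have h1 : C.subtype (eqv y) = 0 := h0
    have h2 : eqv y = 0 := Subtype.ext h1
    have := congrArg eqv.symm h2
    simpa using this
  have hpure : IsPureSubmodule R (A.map E.mkQ) :=
    aux_pure_of_map R _ ψ hψinj (by rw [hmap]; exact hA.1)
  exact hA.2 E hEA hpure

lemma aux_closed_injective {B : Type u} [AddCommGroup B] [Module R B]
    (X E : Submodule R B) (hX : Module.Injective R X) (hEX : E ≤ X)
    (hclosed : ∀ S : Submodule R B, E ≤ S → S ≤ X →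
      (∀ y ∈ S, y ≠ 0 → ∃ r : R, r • y ∈ E ∧ r • y ≠ 0) → S = E) :
    Module.Injective R E := by
  obtain ⟨C, -, hCmax⟩ := zorn_le_nonempty₀ {C : Submodule R B | C ⊓ E = ⊥}
    (fun c hcs hchain y hy => by
      refine ⟨sSup c, ?_, fun z hz => le_sSup hz⟩
      show sSup c ⊓ E = ⊥
      rw [eq_bot_iff]
      rintro z hz
      obtain ⟨hz1, hz2⟩ := Submodule.mem_inf.mp hz
      obtain ⟨W, hWc, hzW⟩ :=
        (Submodule.mem_sSup_of_directed ⟨y, hy⟩ hchain.directedOn).mp hz1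
      have : z ∈ W ⊓ E := Submodule.mem_inf.mpr ⟨hzW, hz2⟩
      rwa [hcs hWc] at this) ⊥ (by simp)
  have hCE : C ⊓ E = ⊥ := hCmax.1
  have hessC : ∀ z : B ⧸ C, z ≠ 0 →
      ∃ (r : R) (v : B), v ∈ E ∧ C.mkQ v = r • z ∧ r • z ≠ 0 := by
    intro z hz
    obtain ⟨y, rfl⟩ := C.mkQ_surjective z
    have hyC : y ∉ C := by
      intro h
      exact hz (by rwa [Submodule.mkQ_apply, Submodule.Quotient.mk_eq_zero])
    have hne : (C ⊔ Submodule.span R {y}) ⊓ E ≠ ⊥ := by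
      intro h0
      have hle : C ⊔ Submodule.span R {y} ≤ C := hCmax.2 h0 le_sup_left
      exact hyC (hle (Submodule.mem_sup_right (Submodule.mem_span_singleton_self y)))
    obtain ⟨v, hv, hvne⟩ := (Submodule.ne_bot_iff _).mp hne
    obtain ⟨hv1, hvE⟩ := Submodule.mem_inf.mp hv
    obtain ⟨cc, hcc, zz, hzz, hsum⟩ := Submodule.mem_sup.mp hv1
    obtain ⟨r, rfl⟩ := Submodule.mem_span_singleton.mp hzz
    have hmkv : C.mkQ v = r • C.mkQ y := by
      rw [← hsum, map_add, map_smul]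
      have : C.mkQ cc = 0 := by
        rw [Submodule.mkQ_apply, Submodule.Quotient.mk_eq_zero]; exact hcc
      rw [this, zero_add]
    refine ⟨r, v, hvE, hmkv, ?_⟩
    rw [← hmkv]
    intro h0
    have : v ∈ C := by rwa [Submodule.mkQ_apply, Submodule.Quotient.mk_eq_zero] at h0
    have : v ∈ C ⊓ E := Submodule.mem_inf.mpr ⟨this, hvE⟩
    rw [hCE] at this
    exact hvne (by simpa using this)
  set f : E →ₗ[R] B ⧸ C := C.mkQ ∘ₗ E.subtype with hf
  have hfinj : Function.Injective f := by
    intro y z hyz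
    have hsub : y.1 - z.1 ∈ C := by rw [← Submodule.Quotient.eq]; exact hyz
    have : y.1 - z.1 ∈ C ⊓ E := Submodule.mem_inf.mpr ⟨hsub, sub_mem y.2 z.2⟩
    rw [hCE] at this
    exact Subtype.ext (sub_eq_zero.mp this)
  obtain ⟨g, hg⟩ := hX.out f hfinj (Submodule.inclusion hEX)
  have hginj : Function.Injective g := by
    rw [injective_iff_map_eq_zero] at *
    intro z hz0
    by_contra hzne
    obtain ⟨r, v, hvE, hrv, hrne⟩ := hessC z hzne
    have h1 : g (r • z) = 0 := by rw [map_smul, hz0, smul_zero]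
    have h2 : r • z = f ⟨v, hvE⟩ := by rw [← hrv]; rfl
    rw [h2, hg] at h1
    have h3 : v = 0 := congrArg Subtype.val h1
    apply hrne
    rw [← hrv, h3, map_zero]
  set S : Submodule R B := (LinearMap.range g).map X.subtype with hS
  have hSX : S ≤ X := Submodule.map_subtype_le X _
  have hES : E ≤ S := by
    intro v hv
    refine Submodule.mem_map.mpr ⟨g (f ⟨v, hv⟩), LinearMap.mem_range_self _ _, ?_⟩
    rw [hg]
    rfl
  have hSE : S = E := by
    refine hclosed S hES hSX ?_
    rintro y hy hyne
    obtain ⟨ξ, hξ, rfl⟩ := Submodule.mem_map.mp hy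
    obtain ⟨z, rfl⟩ := hξ
    have hzne : z ≠ 0 := by
      intro h
      apply hyne
      rw [h, map_zero]
      rfl
    obtain ⟨r, v, hvE, hrv, hrne⟩ := hessC z hzne
    refine ⟨r, ?_, ?_⟩
    · have h2 : r • z = f ⟨v, hvE⟩ := by rw [← hrv]; rfl
      have : r • X.subtype (g z) = X.subtype (g (r • z)) := by
        rw [map_smul, map_smul]
      rw [this, h2, hg]
      exact hvE
    · intro h0
      have h2 : X.subtype (g (r • z)) = 0 := by rw [map_smul, map_smul]; exact h0
      have h3 : g (r • z) = 0 := Subtype.ext h2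
      have h4 : r • z = 0 := hginj (by rw [h3, map_zero])
      exact hrne h4
  set ρ₀ : X →ₗ[R] B := X.subtype ∘ₗ g ∘ₗ C.mkQ ∘ₗ X.subtype with hρ₀
  have hρ₀mem : ∀ ξ : X, ρ₀ ξ ∈ E := by
    intro ξ
    rw [← hSE]
    exact Submodule.mem_map.mpr ⟨g (C.mkQ ξ.1), LinearMap.mem_range_self _ _, rfl⟩
  set ρ : X →ₗ[R] E := LinearMap.codRestrict E ρ₀ hρ₀mem with hρ
  have hri : ∀ v : E, ρ (Submodule.inclusion hEX v) = v := by
    intro v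
    apply Subtype.ext
    show ρ₀ (Submodule.inclusion hEX v) = v.1
    show X.subtype (g (C.mkQ ((Submodule.inclusion hEX v) : B))) = v.1
    have h1 : C.mkQ ((Submodule.inclusion hEX v : X) : B) = f v := rfl
    rw [h1, hg]
    rfl
  exact aux_injective_of_retract R (Submodule.inclusion hEX) ρ hri hX

theorem stmt_8 [IsNoetherianRing R]
    {B : Type u} [AddCommGroup B] [Module R B] (A : Submodule R B)
    (hA : IsPureEssential R A)
    (hZ : ∀ x : B,
      (∀ J : Ideal R, J ≠ ⊥ → (Submodule.span R {x}).annihilator ⊓ J ≠ ⊥) → x ∈ A)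
    (X : Submodule R B) (hX : Module.Injective R X) :
    X ≤ A := by
  intro x hxX
  set I : Ideal R := A.comap (LinearMap.toSpanSingleton R B x) with hI
  have hImem : ∀ r : R, r ∈ I ↔ r • x ∈ A := by
    intro r
    rw [hI, Submodule.mem_comap, LinearMap.toSpanSingleton_apply]
  by_cases hess : ∀ J : Ideal R, J ≠ ⊥ → I ⊓ J ≠ ⊥
  · -- the conductor ideal is essential: use purity and the singular hypothesis
    obtain ⟨n, a, hagen⟩ := Submodule.fg_iff_exists_fin_generating_family.mp
      (IsNoetherian.noetherian I)
    have hax : ∀ i, a i • x ∈ A := fun i =>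
      (hImem (a i)).mp (hagen ▸ Submodule.subset_span (Set.mem_range_self i))
    obtain ⟨a', ha'A, hsol⟩ := aux_pure_solve R A hA.1 x n a hax
    have hann : I ≤ (Submodule.span R {x - a'}).annihilator := by
      rw [← hagen, Submodule.span_le]
      rintro r ⟨i, rfl⟩
      rw [SetLike.mem_coe, Submodule.mem_annihilator_span_singleton]
      rw [smul_sub, hsol i, sub_self]
    have hxa : x - a' ∈ A := by
      apply hZ
      intro J hJ h0
      exact hess J hJ (eq_bot_iff.mpr (h0 ▸ inf_le_inf_right J hann))
    have := A.add_mem hxa ha'A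
    simpa using this
  · -- the conductor ideal is not essential: derive a contradiction
    push_neg at hess
    obtain ⟨J, hJne, hIJ⟩ := hess
    exfalso
    set X₀ : Submodule R B := Submodule.map (LinearMap.toSpanSingleton R B x) J with hX₀
    have hX₀X : X₀ ≤ X := by
      rintro y hy
      obtain ⟨r, _, rfl⟩ := Submodule.mem_map.mp hy
      exact X.smul_mem r hxX
    have hX₀A : X₀ ⊓ A = ⊥ := by
      rw [eq_bot_iff]
      rintro y hy
      obtain ⟨hy1, hy2⟩ := Submodule.mem_inf.mp hy
      obtain ⟨r, hrJ, rfl⟩ := Submodule.mem_map.mp hy1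
      have hrI : r ∈ I := (hImem r).mpr hy2
      have hr0 : r ∈ I ⊓ J := Submodule.mem_inf.mpr ⟨hrI, hrJ⟩
      rw [hIJ] at hr0
      have : r = 0 := by simpa using hr0
      simp [this]
    have hX₀ne : X₀ ≠ ⊥ := by
      intro h0
      apply hJne
      rw [eq_bot_iff]
      intro r hrJ
      have h1 : LinearMap.toSpanSingleton R B x r ∈ X₀ := Submodule.mem_map_of_mem hrJ
      rw [h0] at h1
      have h2 : r • x = 0 := by simpa using h1
      have hrI : r ∈ I := (hImem r).mpr (by rw [h2]; exact A.zero_mem)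
      have : r ∈ I ⊓ J := Submodule.mem_inf.mpr ⟨hrI, hrJ⟩
      rwa [hIJ] at this
    obtain ⟨E, hX₀E, hEmax⟩ := zorn_le_nonempty₀
      {W : Submodule R B | X₀ ≤ W ∧ W ≤ X ∧
        ∀ y ∈ W, y ≠ 0 → ∃ r : R, r • y ∈ X₀ ∧ r • y ≠ 0}
      (fun c hcs hchain y hy => by
        refine ⟨sSup c, ⟨le_trans (hcs hy).1 (le_sSup hy), sSup_le fun W hW => (hcs hW).2.1,
          ?_⟩, fun z hz => le_sSup hz⟩
        intro z hz hzne
        obtain ⟨W, hWc, hzW⟩ :=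
          (Submodule.mem_sSup_of_directed ⟨y, hy⟩ hchain.directedOn).mp hz
        exact (hcs hWc).2.2 z hzW hzne)
      X₀ ⟨le_refl X₀, hX₀X, fun y hy hyne => ⟨1, by simpa using hy, by simpa using hyne⟩⟩
    obtain ⟨hX₀E', hEX, hEssE⟩ := hEmax.1
    have hclosed : ∀ S : Submodule R B, E ≤ S → S ≤ X →
        (∀ y ∈ S, y ≠ 0 → ∃ r : R, r • y ∈ E ∧ r • y ≠ 0) → S = E := by
      intro S hES hSX hEssES
      have hmem : X₀ ≤ S ∧ S ≤ X ∧
          ∀ y ∈ S, y ≠ 0 → ∃ r : R, r • y ∈ X₀ ∧ r • y ≠ 0 := by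
        refine ⟨le_trans hX₀E' hES, hSX, ?_⟩
        intro y hy hyne
        obtain ⟨r, hrE, hrne⟩ := hEssES y hy hyne
        obtain ⟨r', hr'X₀, hr'ne⟩ := hEssE (r • y) hrE hrne
        exact ⟨r' * r, by rw [mul_smul]; exact hr'X₀, by rw [mul_smul]; exact hr'ne⟩
      exact le_antisymm (hEmax.2 hmem hES) hES
    have hEinj := aux_closed_injective R X E hX hEX hclosed
    have hEA : E ⊓ A = ⊥ := by
      rw [eq_bot_iff]
      rintro y hy
      obtain ⟨hyE, hyA⟩ := Submodule.mem_inf.mp hy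
      by_cases hy0 : y = 0
      · simp [hy0]
      · obtain ⟨r, hrX₀, hrne⟩ := hEssE y hyE hy0
        have hmem2 : r • y ∈ X₀ ⊓ A := Submodule.mem_inf.mpr ⟨hrX₀, A.smul_mem r hyA⟩
        rw [hX₀A] at hmem2
        exact (hrne (by simpa using hmem2)).elim
    have hEbot := aux_pureEssential_bot R A hA E hEinj hEA
    apply hX₀ne
    rw [eq_bot_iff]
    exact hEbot ▸ hX₀E'
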